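/- Let n ≥ 3 be an integer, let E be a symmetric real n×n matrix with trace zero, let v ∈ ℝⁿ, set w = E v, and define T_{ijk} = ((n−1)/(n−2))·(E_{ik}·v_j − E_{ij}·v_k) + (1/(n−2))·(δ_{ik}·w_j − δ_{ij}·w_k) for 1 ≤ i, j, k ≤ n, where δ is the Kronecker delta. Then Σ_{i,j,k} E_{ik}·T_{ijk}·v_j = ((n−2)/(2(n−1)))·Σ_{i,j,k} T_{ijk}². -/

import Mathlib

/-- For the auxiliary 3-tensor `T` built from a trace-free symmetric
matrix `E` and a vector `v`, one has `E_{ik} T_{ijk} v_j = ((n-2)/(2(n-1))) ‖T‖²`. -/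
theorem stmt_7 (n : ℕ) (hn : 3 ≤ n) (E : Fin n → Fin n → ℝ)
    (hsymm : ∀ i j, E i j = E j i) (htr : ∑ i, E i i = 0)
    (v : Fin n → ℝ) (w : Fin n → ℝ) (hw : ∀ i, w i = ∑ l, E i l * v l)
    (T : Fin n → Fin n → Fin n → ℝ)
    (hT : ∀ i j k, T i j k =
      (((n : ℝ) - 1) / ((n : ℝ) - 2)) * (E i k * v j - E i j * v k)
        + (1 / ((n : ℝ) - 2)) * ((if i = k then (1 : ℝ) else 0) * w j
          - (if i = j then (1 : ℝ) else 0) * w k)) :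
    ∑ i, ∑ j, ∑ k, E i k * T i j k * v j =
      (((n : ℝ) - 2) / (2 * ((n : ℝ) - 1))) * ∑ i, ∑ j, ∑ k, (T i j k) ^ 2 := by
  have hn' : (3 : ℝ) ≤ (n : ℝ) := by exact_mod_cast hn
  have hn2 : ((n : ℝ) - 2) ≠ 0 := by linarith
  have hn1 : ((n : ℝ) - 1) ≠ 0 := by linarith
  set a : ℝ := ((n : ℝ) - 1) / ((n : ℝ) - 2) with ha
  set b : ℝ := 1 / ((n : ℝ) - 2) with hb
  have hw' : ∀ k, ∑ i, E i k * v i = w k := by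
    intro k
    rw [hw k]
    exact Finset.sum_congr rfl fun i _ => by rw [hsymm i k]
  -- the basic scalar quantities
  set S : ℝ := ∑ i, ∑ k, E i k * E i k with hS
  set W : ℝ := ∑ i, w i * w i with hW
  set V : ℝ := ∑ j, v j * v j with hV
  -- triple sum evaluations
  have m1 : ∑ i, ∑ j, ∑ k, (E i k * E i k) * (v j * v j) = S * V := by
    simp only [← Finset.sum_mul, ← Finset.mul_sum]; rfl
  have m1' : ∑ i, ∑ j, ∑ k, (E i j * E i j) * (v k * v k) = S * V := by
    simp only [← Finset.sum_mul, ← Finset.mul_sum]; rfl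
  have m2 : ∑ i, ∑ j, ∑ k, (E i j * v j) * (E i k * v k) = W := by
    refine Finset.sum_congr rfl fun i _ => ?_
    rw [hw i, Finset.sum_mul_sum]
  have m3 : ∑ i, ∑ j, ∑ k, (if i = k then (1:ℝ) else 0) * (E i k * (v j * w j)) = 0 := by
    have h : ∀ i j, ∑ k, (if i = k then (1:ℝ) else 0) * (E i k * (v j * w j))
        = E i i * (v j * w j) := fun i j => by simp
    simp only [h, ← Finset.mul_sum, ← Finset.sum_mul, htr, zero_mul]
  have m4 : ∑ i, ∑ j, ∑ k, (if i = j then (1:ℝ) else 0) * ((E i k * w k) * v j) = W := by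
    have h : ∀ i, ∑ j, ∑ k, (if i = j then (1:ℝ) else 0) * ((E i k * w k) * v j)
        = ∑ k, (E i k * w k) * v i := by
      intro i
      rw [Finset.sum_comm]
      refine Finset.sum_congr rfl fun k _ => ?_
      simp [ite_mul]
    simp only [h]
    rw [Finset.sum_comm]
    refine Finset.sum_congr rfl fun k _ => ?_
    rw [← hw' k, Finset.sum_mul]
    exact Finset.sum_congr rfl fun i _ => by ring
  have m5 : ∑ i, ∑ j, ∑ k, (if i = k then (1:ℝ) else 0) * (E i j * (v k * w j)) = W := by
    have h : ∀ i j, ∑ k, (if i = k then (1:ℝ) else 0) * (E i j * (v k * w j))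
        = (E i j * v i) * w j := fun i j => by simp; ring
    simp only [h]
    rw [Finset.sum_comm]
    refine Finset.sum_congr rfl fun j _ => ?_
    rw [← hw' j, Finset.sum_mul]
  have m6 : ∑ i, ∑ j, ∑ k, (if i = j then (1:ℝ) else 0) * (E i j * (v k * w k)) = 0 := by
    have h : ∀ i j, ∑ k, (if i = j then (1:ℝ) else 0) * (E i j * (v k * w k))
        = (if i = j then (1:ℝ) else 0) * (E i j * ∑ k, v k * w k) := by
      intro i j
      rw [← Finset.mul_sum, ← Finset.mul_sum]
    have h2 : ∀ i, ∑ j, (if i = j then (1:ℝ) else 0) * (E i j * ∑ k, v k * w k)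
        = E i i * ∑ k, v k * w k := fun i => by simp
    simp only [h, h2, ← Finset.sum_mul, htr, zero_mul]
  have m7 : ∑ i : Fin n, ∑ j : Fin n, ∑ k : Fin n, (if i = k then (1:ℝ) else 0) * (w j * w j)
      = (n : ℝ) * W := by
    have h : ∀ (i : Fin n) (j : Fin n), ∑ k : Fin n, (if i = k then (1:ℝ) else 0) * (w j * w j)
        = w j * w j := fun i j => by simp
    simp only [h, Finset.sum_const, Finset.card_univ, Fintype.card_fin, nsmul_eq_mul]; rfl
  have m8 : ∑ i : Fin n, ∑ j : Fin n, ∑ k : Fin n, (if i = j then (1:ℝ) else 0) * (w k * w k)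
      = (n : ℝ) * W := by
    have h : ∀ i : Fin n, ∑ j : Fin n, ∑ k, (if i = j then (1:ℝ) else 0) * (w k * w k)
        = ∑ k, w k * w k := by
      intro i
      rw [Finset.sum_comm]
      refine Finset.sum_congr rfl fun k _ => ?_
      simp
    simp only [h, Finset.sum_const, Finset.card_univ, Fintype.card_fin, nsmul_eq_mul]; rfl
  have m9 : ∑ i, ∑ j, ∑ k, (if i = k then (1:ℝ) else 0) *
      ((if i = j then (1:ℝ) else 0) * (w j * w k)) = W := by
    have h : ∀ i j, ∑ k, (if i = k then (1:ℝ) else 0) * ((if i = j then (1:ℝ) else 0) * (w j * w k))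
        = (if i = j then (1:ℝ) else 0) * (w j * w i) := fun i j => by simp
    simp only [h]
    refine Finset.sum_congr rfl fun i _ => ?_
    simp
  -- expand the left-hand side
  have e1 : ∀ i j k, E i k * T i j k * v j =
      a * ((E i k * E i k) * (v j * v j)) - a * ((E i j * v j) * (E i k * v k))
      + b * ((if i = k then (1:ℝ) else 0) * (E i k * (v j * w j)))
      - b * ((if i = j then (1:ℝ) else 0) * ((E i k * w k) * v j)) := by
    intro i j k
    rw [hT i j k]
    ring
  have hL : ∑ i, ∑ j, ∑ k, E i k * T i j k * v j
      = a * (S * V) - a * W + b * 0 - b * W := by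
    calc ∑ i, ∑ j, ∑ k, E i k * T i j k * v j
        = ∑ i, ∑ j, ∑ k, (a * ((E i k * E i k) * (v j * v j)) - a * ((E i j * v j) * (E i k * v k)) + b * ((if i = k then (1:ℝ) else 0) * (E i k * (v j * w j))) - b * ((if i = j then (1:ℝ) else 0) * ((E i k * w k) * v j))) := by
          simp only [e1]
      _ = a * (∑ i : Fin n, ∑ j : Fin n, ∑ k : Fin n, (E i k * E i k) * (v j * v j)) - a * (∑ i : Fin n, ∑ j : Fin n, ∑ k : Fin n, (E i j * v j) * (E i k * v k)) + b * (∑ i : Fin n, ∑ j : Fin n, ∑ k : Fin n, (if i = k then (1:ℝ) else 0) * (E i k * (v j * w j))) - b * (∑ i : Fin n, ∑ j : Fin n, ∑ k : Fin n, (if i = j then (1:ℝ) else 0) * ((E i k * w k) * v j)) := by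
          simp only [Finset.mul_sum, ← Finset.sum_sub_distrib, ← Finset.sum_add_distrib]
      _ = a * (S * V) - a * W + b * 0 - b * W := by rw [m1, m2, m3, m4]
  -- expand the squared norm
  have e2 : ∀ i j k, (T i j k) ^ 2 =
      a^2 * ((E i k * E i k) * (v j * v j)) + a^2 * ((E i j * E i j) * (v k * v k))
      - (2*a^2) * ((E i j * v j) * (E i k * v k))
      + (2*a*b) * ((if i = k then (1:ℝ) else 0) * (E i k * (v j * w j)))
      - (2*a*b) * ((if i = j then (1:ℝ) else 0) * ((E i k * w k) * v j))
      - (2*a*b) * ((if i = k then (1:ℝ) else 0) * (E i j * (v k * w j)))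
      + (2*a*b) * ((if i = j then (1:ℝ) else 0) * (E i j * (v k * w k)))
      + b^2 * ((if i = k then (1:ℝ) else 0) * (w j * w j))
      + b^2 * ((if i = j then (1:ℝ) else 0) * (w k * w k))
      - (2*b^2) * ((if i = k then (1:ℝ) else 0) * ((if i = j then (1:ℝ) else 0) * (w j * w k))) := by
    intro i j k
    rw [hT i j k]
    split_ifs <;> ring
  have hR : ∑ i, ∑ j, ∑ k, (T i j k) ^ 2
      = a^2 * (S * V) + a^2 * (S * V) - (2*a^2) * W
        + (2*a*b) * 0 - (2*a*b) * W - (2*a*b) * W + (2*a*b) * 0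
        + b^2 * ((n:ℝ) * W) + b^2 * ((n:ℝ) * W) - (2*b^2) * W := by
    calc ∑ i, ∑ j, ∑ k, (T i j k) ^ 2
        = ∑ i, ∑ j, ∑ k, (a^2 * ((E i k * E i k) * (v j * v j)) + a^2 * ((E i j * E i j) * (v k * v k)) - (2*a^2) * ((E i j * v j) * (E i k * v k))
            + (2*a*b) * ((if i = k then (1:ℝ) else 0) * (E i k * (v j * w j))) - (2*a*b) * ((if i = j then (1:ℝ) else 0) * ((E i k * w k) * v j)) - (2*a*b) * ((if i = k then (1:ℝ) else 0) * (E i j * (v k * w j))) + (2*a*b) * ((if i = j then (1:ℝ) else 0) * (E i j * (v k * w k)))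
            + b^2 * ((if i = k then (1:ℝ) else 0) * (w j * w j)) + b^2 * ((if i = j then (1:ℝ) else 0) * (w k * w k)) - (2*b^2) * ((if i = k then (1:ℝ) else 0) * ((if i = j then (1:ℝ) else 0) * (w j * w k)))) := by
          simp only [e2]
      _ = a^2 * (∑ i : Fin n, ∑ j : Fin n, ∑ k : Fin n, (E i k * E i k) * (v j * v j)) + a^2 * (∑ i : Fin n, ∑ j : Fin n, ∑ k : Fin n, (E i j * E i j) * (v k * v k)) - (2*a^2) * (∑ i : Fin n, ∑ j : Fin n, ∑ k : Fin n, (E i j * v j) * (E i k * v k))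
            + (2*a*b) * (∑ i : Fin n, ∑ j : Fin n, ∑ k : Fin n, (if i = k then (1:ℝ) else 0) * (E i k * (v j * w j))) - (2*a*b) * (∑ i : Fin n, ∑ j : Fin n, ∑ k : Fin n, (if i = j then (1:ℝ) else 0) * ((E i k * w k) * v j)) - (2*a*b) * (∑ i : Fin n, ∑ j : Fin n, ∑ k : Fin n, (if i = k then (1:ℝ) else 0) * (E i j * (v k * w j))) + (2*a*b) * (∑ i : Fin n, ∑ j : Fin n, ∑ k : Fin n, (if i = j then (1:ℝ) else 0) * (E i j * (v k * w k)))
            + b^2 * (∑ i : Fin n, ∑ j : Fin n, ∑ k : Fin n, (if i = k then (1:ℝ) else 0) * (w j * w j)) + b^2 * (∑ i : Fin n, ∑ j : Fin n, ∑ k : Fin n, (if i = j then (1:ℝ) else 0) * (w k * w k)) - (2*b^2) * (∑ i : Fin n, ∑ j : Fin n, ∑ k : Fin n, (if i = k then (1:ℝ) else 0) * ((if i = j then (1:ℝ) else 0) * (w j * w k))) := by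
          simp only [Finset.mul_sum, ← Finset.sum_sub_distrib, ← Finset.sum_add_distrib]
      _ = _ := by rw [m1, m1', m2, m3, m4, m5, m6, m7, m8, m9]
  rw [hL, hR, ha, hb]
  field_simp
  ring
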